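/- If a finite category C has skeletal Möbius inversion with inverse ν_C of ζ_C in the corner algebra, then ν_C·𝟙 is the unique weighting on C that is constant on isomorphism classes of objects, and 𝟙·ν_C is the unique coweighting constant on isomorphism classes. -/
import Mathlib


open CategoryTheory
open scoped Classical

universe u v

/-- Convolution product on the Möbius algebra of rational-valued functions
on pairs of objects of a finite category. -/
noncomputable def conv (C : Type u) [Category.{v} C] [Fintype C]
    (α β : C → C → ℚ) : C → C → ℚ :=
  fun x y => ∑ z : C, α x z * β z y

/-- The size of the isomorphism class of an object. -/
noncomputable def isoCard (C : Type u) [Category.{v} C] [Fintype C] (x : C) : ℚ :=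
  ((Finset.univ.filter fun z : C => Nonempty (x ≅ z)).card : ℚ)

/-- The idempotent `e_C` : `e_C(x,y) = 1/|[x]|` if `x ≅ y`, and `0` otherwise. -/
noncomputable def eFun (C : Type u) [Category.{v} C] [Fintype C] : C → C → ℚ :=
  fun x y => if Nonempty (x ≅ y) then 1 / isoCard C x else 0

/-- The zeta function of a finite category: `ζ_C(x,y) = |C(x,y)|`. -/
noncomputable def zeta (C : Type u) [Category.{v} C] [Fintype C]
    [∀ x y : C, Fintype (x ⟶ y)] : C → C → ℚ :=
  fun x y => (Fintype.card (x ⟶ y) : ℚ)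

/-- The Kronecker delta, the multiplicative identity of the Möbius algebra. -/
noncomputable def delta (C : Type u) [Category.{v} C] [Fintype C] : C → C → ℚ :=
  fun x y => if x = y then 1 else 0

/-- A weighting on a finite category: `Σ_y |C(x,y)| k(y) = 1` for all `x`. -/
def Weighting (C : Type u) [Category.{v} C] [Fintype C]
    [∀ x y : C, Fintype (x ⟶ y)] (k : C → ℚ) : Prop :=
  ∀ x : C, ∑ y : C, zeta C x y * k y = 1

/-- A coweighting on a finite category: `Σ_x k(x) |C(x,y)| = 1` for all `y`. -/
def Coweighting (C : Type u) [Category.{v} C] [Fintype C]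
    [∀ x y : C, Fintype (x ⟶ y)] (k : C → ℚ) : Prop :=
  ∀ y : C, ∑ x : C, k x * zeta C x y = 1

/-- A function on objects constant on isomorphism classes. -/
def IsoInvariant (C : Type u) [Category.{v} C] (k : C → ℚ) : Prop :=
  ∀ x y : C, Nonempty (x ≅ y) → k x = k y


section Helpers
variable (C : Type u) [Category.{v} C] [Fintype C]

lemma iso_class_eq {x y : C} (h : Nonempty (x ≅ y)) :
    (Finset.univ.filter fun z : C => Nonempty (x ≅ z)) =
    (Finset.univ.filter fun z : C => Nonempty (y ≅ z)) := by
  apply Finset.filter_congr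
  intro z _
  constructor
  · rintro ⟨i⟩; exact ⟨h.some.symm.trans i⟩
  · rintro ⟨i⟩; exact ⟨h.some.trans i⟩

lemma isoCard_eq_of_iso {x y : C} (h : Nonempty (x ≅ y)) :
    isoCard C x = isoCard C y := by
  unfold isoCard; rw [iso_class_eq C h]

lemma isoCard_ne_zero (x : C) : isoCard C x ≠ 0 := by
  unfold isoCard
  have : x ∈ Finset.univ.filter fun z : C => Nonempty (x ≅ z) := by
    simp [Finset.mem_filter]; exact ⟨Iso.refl x⟩
  have hpos : 0 < (Finset.univ.filter fun z : C => Nonempty (x ≅ z)).card :=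
    Finset.card_pos.2 ⟨x, this⟩
  exact_mod_cast hpos.ne'

lemma eFun_left_eq {x y : C} (h : Nonempty (x ≅ y)) (z : C) :
    eFun C x z = eFun C y z := by
  unfold eFun
  have hiff : Nonempty (x ≅ z) ↔ Nonempty (y ≅ z) := by
    constructor
    · rintro ⟨i⟩; exact ⟨h.some.symm.trans i⟩
    · rintro ⟨i⟩; exact ⟨h.some.trans i⟩
  rw [isoCard_eq_of_iso C h]
  by_cases hc : Nonempty (x ≅ z)
  · rw [if_pos hc, if_pos (hiff.mp hc)]
  · rw [if_neg hc, if_neg (fun hc' => hc (hiff.mpr hc'))]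

lemma eFun_right_eq {y y' : C} (h : Nonempty (y ≅ y')) (w : C) :
    eFun C w y = eFun C w y' := by
  unfold eFun
  have hiff : Nonempty (w ≅ y) ↔ Nonempty (w ≅ y') := by
    constructor
    · rintro ⟨i⟩; exact ⟨i.trans h.some⟩
    · rintro ⟨i⟩; exact ⟨i.trans h.some.symm⟩
  by_cases hc : Nonempty (w ≅ y)
  · rw [if_pos hc, if_pos (hiff.mp hc)]
  · rw [if_neg hc, if_neg (fun hc' => hc (hiff.mpr hc'))]

lemma sum_eFun_row (x : C) : ∑ z : C, eFun C x z = 1 := by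
  unfold eFun
  rw [Finset.sum_ite, Finset.sum_const_zero, add_zero, Finset.sum_const,
    nsmul_eq_mul]
  have : ((Finset.univ.filter fun z : C => Nonempty (x ≅ z)).card : ℚ)
      = isoCard C x := rfl
  rw [this]
  field_simp [isoCard_ne_zero C x]

/-- Weighted sum against a row of `eFun` with an iso-invariant function. -/
lemma sum_eFun_row_mul (k : C → ℚ) (hk : IsoInvariant C k) (x : C) :
    ∑ z : C, eFun C x z * k z = k x := by
  unfold eFun
  have h1 : ∀ z : C, (if Nonempty (x ≅ z) then 1 / isoCard C x else 0) * k z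
      = if Nonempty (x ≅ z) then (1 / isoCard C x) * k x else 0 := by
    intro z
    by_cases hc : Nonempty (x ≅ z)
    · rw [if_pos hc, if_pos hc, hk x z hc]
    · rw [if_neg hc, if_neg hc, zero_mul]
  rw [Finset.sum_congr rfl (fun z _ => h1 z)]
  rw [Finset.sum_ite, Finset.sum_const_zero, add_zero, Finset.sum_const,
    nsmul_eq_mul]
  have : ((Finset.univ.filter fun z : C => Nonempty (x ≅ z)).card : ℚ)
      = isoCard C x := rfl
  rw [this]
  field_simp [isoCard_ne_zero C x]

lemma sum_eFun_col (y : C) : ∑ x : C, eFun C x y = 1 := by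
  have h1 : ∀ x : C, eFun C x y
      = if Nonempty (y ≅ x) then 1 / isoCard C y else 0 := by
    intro x
    unfold eFun
    by_cases hc : Nonempty (x ≅ y)
    · rw [if_pos hc, if_pos ⟨hc.some.symm⟩, isoCard_eq_of_iso C hc]
    · rw [if_neg hc, if_neg (fun ⟨i⟩ => hc ⟨i.symm⟩)]
  rw [Finset.sum_congr rfl (fun x _ => h1 x)]
  rw [Finset.sum_ite, Finset.sum_const_zero, add_zero, Finset.sum_const,
    nsmul_eq_mul]
  have : ((Finset.univ.filter fun z : C => Nonempty (y ≅ z)).card : ℚ)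
      = isoCard C y := rfl
  rw [this]
  field_simp [isoCard_ne_zero C y]

lemma sum_eFun_col_mul (k : C → ℚ) (hk : IsoInvariant C k) (y : C) :
    ∑ x : C, k x * eFun C x y = k y := by
  have h1 : ∀ x : C, k x * eFun C x y
      = if Nonempty (y ≅ x) then (1 / isoCard C y) * k y else 0 := by
    intro x
    unfold eFun
    by_cases hc : Nonempty (x ≅ y)
    · rw [if_pos hc, if_pos ⟨hc.some.symm⟩, isoCard_eq_of_iso C hc,
        hk x y hc, mul_comm]
    · rw [if_neg hc, if_neg (fun ⟨i⟩ => hc ⟨i.symm⟩), mul_zero]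
  rw [Finset.sum_congr rfl (fun x _ => h1 x)]
  rw [Finset.sum_ite, Finset.sum_const_zero, add_zero, Finset.sum_const,
    nsmul_eq_mul]
  have : ((Finset.univ.filter fun z : C => Nonempty (y ≅ z)).card : ℚ)
      = isoCard C y := rfl
  rw [this]
  field_simp [isoCard_ne_zero C y]

end Helpers

/-- if `C` has skeletal Möbius inversion with inverse `ν_C`, then
`ν_C·𝟙` is the unique weighting on `C` constant on isomorphism classes, and
`𝟙·ν_C` is the unique coweighting constant on isomorphism classes. -/
theorem skeletal_weighting_unique (C : Type u) [Category.{v} C] [Fintype C]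
    [∀ x y : C, Fintype (x ⟶ y)] (ν : C → C → ℚ)
    (hcorner : conv C (eFun C) (conv C ν (eFun C)) = ν)
    (hl : conv C (zeta C) ν = eFun C) (hr : conv C ν (zeta C) = eFun C) :
    (Weighting C (fun x => ∑ y : C, ν x y) ∧
      IsoInvariant C (fun x => ∑ y : C, ν x y) ∧
      ∀ k : C → ℚ, Weighting C k → IsoInvariant C k →
        k = fun x => ∑ y : C, ν x y) ∧
    (Coweighting C (fun y => ∑ x : C, ν x y) ∧
      IsoInvariant C (fun y => ∑ x : C, ν x y) ∧
      ∀ k : C → ℚ, Coweighting C k → IsoInvariant C k →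
        k = fun y => ∑ x : C, ν x y) := by
  constructor
  · refine ⟨?_, ?_, ?_⟩
    · -- weighting
      intro x
      calc ∑ y : C, zeta C x y * ∑ z : C, ν y z
          = ∑ y : C, ∑ z : C, zeta C x y * ν y z := by
            simp [Finset.mul_sum]
        _ = ∑ z : C, ∑ y : C, zeta C x y * ν y z := Finset.sum_comm
        _ = ∑ z : C, eFun C x z := by
            refine Finset.sum_congr rfl (fun z _ => ?_)
            exact congrFun (congrFun hl x) z
        _ = 1 := sum_eFun_row C x
    · -- iso-invariance
      intro x y h
      have hx : ∀ a b, ν a b = ∑ w : C, eFun C a w * conv C ν (eFun C) w b := by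
        intro a b
        have := congrFun (congrFun hcorner a) b
        exact this.symm
      calc ∑ z : C, ν x z
          = ∑ z : C, ∑ w : C, eFun C x w * conv C ν (eFun C) w z := by
            exact Finset.sum_congr rfl (fun z _ => hx x z)
        _ = ∑ z : C, ∑ w : C, eFun C y w * conv C ν (eFun C) w z := by
            refine Finset.sum_congr rfl (fun z _ => ?_)
            refine Finset.sum_congr rfl (fun w _ => ?_)
            rw [eFun_left_eq C h w]
        _ = ∑ z : C, ν y z := by
            exact Finset.sum_congr rfl (fun z _ => (hx y z).symm)
    · -- uniqueness
      intro k hw hk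
      funext x
      calc k x = ∑ z : C, eFun C x z * k z := (sum_eFun_row_mul C k hk x).symm
        _ = ∑ z : C, (∑ w : C, ν x w * zeta C w z) * k z := by
            refine Finset.sum_congr rfl (fun z _ => ?_)
            exact congrArg (· * k z) (congrFun (congrFun hr x) z).symm
        _ = ∑ z : C, ∑ w : C, ν x w * (zeta C w z * k z) := by
            simp [Finset.sum_mul, mul_assoc]
        _ = ∑ w : C, ∑ z : C, ν x w * (zeta C w z * k z) := Finset.sum_comm
        _ = ∑ w : C, ν x w * ∑ z : C, zeta C w z * k z := by
            simp [Finset.mul_sum]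
        _ = ∑ w : C, ν x w := by
            refine Finset.sum_congr rfl (fun w _ => ?_)
            rw [hw w, mul_one]
  · refine ⟨?_, ?_, ?_⟩
    · -- coweighting
      intro y
      calc ∑ x : C, (∑ z : C, ν z x) * zeta C x y
          = ∑ x : C, ∑ z : C, ν z x * zeta C x y := by
            simp [Finset.sum_mul]
        _ = ∑ z : C, ∑ x : C, ν z x * zeta C x y := Finset.sum_comm
        _ = ∑ z : C, eFun C z y := by
            refine Finset.sum_congr rfl (fun z _ => ?_)
            exact congrFun (congrFun hr z) y
        _ = 1 := sum_eFun_col C y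
    · -- iso-invariance
      intro y y' h
      have hx : ∀ a b, ν a b = ∑ w : C, conv C (eFun C) ν a w * eFun C w b := by
        intro a b
        have h1 := congrFun (congrFun hcorner a) b
        -- hcorner : conv e (conv ν e) = ν ; use associativity
        have assoc : conv C (eFun C) (conv C ν (eFun C)) a b
            = ∑ w : C, conv C (eFun C) ν a w * eFun C w b := by
          unfold conv
          simp only [Finset.mul_sum, Finset.sum_mul]
          rw [Finset.sum_comm]
          exact Finset.sum_congr rfl fun w _ =>
            Finset.sum_congr rfl fun s _ => by ring
        rw [← h1, assoc]
      calc ∑ x : C, ν x y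
          = ∑ x : C, ∑ w : C, conv C (eFun C) ν x w * eFun C w y := by
            exact Finset.sum_congr rfl (fun x _ => hx x y)
        _ = ∑ x : C, ∑ w : C, conv C (eFun C) ν x w * eFun C w y' := by
            refine Finset.sum_congr rfl (fun x _ => ?_)
            refine Finset.sum_congr rfl (fun w _ => ?_)
            rw [eFun_right_eq C h w]
        _ = ∑ x : C, ν x y' := by
            exact Finset.sum_congr rfl (fun x _ => (hx x y').symm)
    · -- uniqueness
      intro k hw hk
      funext y
      calc k y = ∑ x : C, k x * eFun C x y := (sum_eFun_col_mul C k hk y).symm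
        _ = ∑ x : C, k x * ∑ w : C, zeta C x w * ν w y := by
            refine Finset.sum_congr rfl (fun x _ => ?_)
            exact congrArg (k x * ·) (congrFun (congrFun hl x) y).symm
        _ = ∑ x : C, ∑ w : C, (k x * zeta C x w) * ν w y := by
            simp [Finset.mul_sum, mul_assoc]
        _ = ∑ w : C, ∑ x : C, (k x * zeta C x w) * ν w y := Finset.sum_comm
        _ = ∑ w : C, (∑ x : C, k x * zeta C x w) * ν w y := by
            simp [Finset.sum_mul]
        _ = ∑ w : C, ν w y := by
            refine Finset.sum_congr rfl (fun w _ => ?_)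
            rw [hw w, one_mul]
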